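/- arXiv:1305.4911 — 4 statements merged into one kernel-verified Lean document; each statement's English description precedes it below -/
import Mathlib

section
/- For all integers u, v ≥ 1, the integer (2^(u+v))! / (((2^u)!)^(2^v) · (2^v)!) is odd. -/
lemma v2_factorial_two_pow (t : ℕ) :
    padicValNat 2 (Nat.factorial (2 ^ t)) = 2 ^ t - 1 := by
  induction t with
  | zero => simp
  | succ t ih =>
    have : (2 : ℕ) ^ (t + 1) = 2 * 2 ^ t := by ring
    rw [this, padicValNat_factorial_mul, ih]
    have h1 : 1 ≤ (2:ℕ) ^ t := Nat.one_le_two_pow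
    omega

/-- For all integers `u, v ≥ 1`, the integer
`(2^(u+v))! / (((2^u)!)^(2^v) * (2^v)!)` is odd. -/
theorem stmt_4 (u v : ℕ) (hu : 1 ≤ u) (hv : 1 ≤ v) :
    Odd (Nat.factorial (2 ^ (u + v)) /
      ((Nat.factorial (2 ^ u)) ^ (2 ^ v) * Nat.factorial (2 ^ v))) := by
  have hn : (2:ℕ) ^ u ≠ 0 := by positivity
  have key := Nat.uniformBell_mul_eq (2 ^ v) hn
  have hmul : (2:ℕ) ^ v * 2 ^ u = 2 ^ (u + v) := by rw [pow_add]; ring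
  rw [hmul] at key
  have hdiv : Nat.factorial (2 ^ (u + v)) /
      ((Nat.factorial (2 ^ u)) ^ (2 ^ v) * Nat.factorial (2 ^ v)) =
      Nat.uniformBell (2 ^ v) (2 ^ u) := by
    rw [Nat.uniformBell_eq_div (2 ^ v) hn, hmul]
  rw [hdiv]
  set q := Nat.uniformBell (2 ^ v) (2 ^ u) with hq
  have hq0 : q ≠ 0 := by
    intro h
    rw [h] at key
    simp at key
    exact absurd key.symm (Nat.factorial_ne_zero _)
  -- compute padic valuations
  have hv2 : padicValNat 2 q = 0 := by
    have := congrArg (padicValNat 2) key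
    rw [padicValNat.mul (mul_ne_zero hq0 (pow_ne_zero _ (Nat.factorial_ne_zero _)))
          (Nat.factorial_ne_zero _),
        padicValNat.mul hq0 (pow_ne_zero _ (Nat.factorial_ne_zero _)),
        padicValNat.pow _ _,
        v2_factorial_two_pow, v2_factorial_two_pow, v2_factorial_two_pow] at this
    have h1 : 1 ≤ (2:ℕ) ^ u := Nat.one_le_two_pow
    have h2 : 1 ≤ (2:ℕ) ^ v := Nat.one_le_two_pow
    have h3 : (2:ℕ) ^ (u + v) = 2 ^ u * 2 ^ v := pow_add 2 u v
    have h4 : 1 ≤ (2:ℕ) ^ (u + v) := Nat.one_le_two_pow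
    have h5 : (2:ℕ) ^ v * (2 ^ u - 1) = 2 ^ (u + v) - 2 ^ v := by
      rw [Nat.mul_sub, mul_one, h3, mul_comm]
    omega
  rw [Nat.odd_iff, ← Nat.two_dvd_ne_zero]
  intro hdvd
  have := one_le_padicValNat_of_dvd hq0 hdvd
  omega
end

section
/- Let m = a·b ≥ 8 with a, b ≥ 2, and let p be the smallest prime divisor of m. Then m! / (((m/p)!)^p · p!) ≤ m! / ((a!)^b · b!); that is, among all factorizations m = ab with a, b ≥ 2, the quantity w(a, b) = m!/((a!)^b · b!) is smallest when b is the smallest prime divisor of m. -/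
open Finset

private lemma prod_range_add_two (n : ℕ) : ∏ i ∈ range n, (i + 2) = (n + 1).factorial := by
  induction n with
  | zero => simp
  | succ n ih =>
    rw [prod_range_succ, ih, Nat.factorial_succ (n + 1)]
    exact mul_comm _ _

private lemma prod_range_add_one' (n : ℕ) : ∏ i ∈ range n, (i + 1) = n.factorial := by
  induction n with
  | zero => simp
  | succ n ih =>
    rw [prod_range_succ, ih, Nat.factorial_succ n]
    exact mul_comm _ _

private lemma Hsucc (u : ℕ → ℕ) (n X : ℕ) (h : n ≤ X) :
    ∏ i ∈ range X, u i ^ (n + 1 - (i + 1)) =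
      (∏ i ∈ range X, u i ^ (n - (i + 1))) * ∏ i ∈ range n, u i := by
  have h1 : ∀ i ∈ range X, u i ^ (n + 1 - (i + 1)) =
      u i ^ (n - (i + 1)) * u i ^ (if i < n then 1 else 0) := by
    intro i _
    rw [← pow_add]
    congr 1
    split_ifs <;> omega
  rw [prod_congr rfl h1, prod_mul_distrib]
  congr 1
  calc ∏ i ∈ range X, u i ^ (if i < n then 1 else 0)
      = ∏ i ∈ range n, u i ^ (if i < n then 1 else 0) :=
        (prod_subset (range_subset_range.mpr h)
          (fun i _ hi => by rw [if_neg (by simpa using hi), pow_zero])).symm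
    _ = ∏ i ∈ range n, u i :=
        prod_congr rfl fun i hi => by rw [if_pos (mem_range.mp hi), pow_one]

private lemma ident (n X : ℕ) (h : n ≤ X) :
    ∏ i ∈ range X, (i + 2) ^ (n - (i + 1)) =
      n.factorial * ∏ i ∈ range X, (i + 1) ^ (n - (i + 1)) := by
  induction n with
  | zero => simp
  | succ n ih =>
    rw [Hsucc (fun i => i + 2) n X (by omega), Hsucc (fun i => i + 1) n X (by omega),
        ih (by omega), prod_range_add_two, prod_range_add_one', Nat.factorial_succ]
    ring

private lemma termwise (y z R δ : ℕ) (h : y ≤ z) :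
    z ^ R * y ^ (R + δ) ≤ z ^ (R + δ) * y ^ R := by
  rw [pow_add, pow_add]
  calc z ^ R * (y ^ R * y ^ δ) = (z ^ R * y ^ R) * y ^ δ := by ring
    _ ≤ (z ^ R * y ^ R) * z ^ δ := Nat.mul_le_mul_left _ (Nat.pow_le_pow_left h δ)
    _ = z ^ R * z ^ δ * y ^ R := by ring

private lemma dom (a b c d x : ℕ) (hd2 : 2 ≤ d) (hda : d ≤ a) (hdb : d ≤ b)
    (hcd : c * d = a * b) (hx : 1 ≤ x) :
    b * (a - x) + (b - x) ≤ d * (c - x) + (d - x) := by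
  have hd0 : 0 < d := by omega
  have hbc : b ≤ c := by
    have h : b * d ≤ c * d := by
      calc b * d = d * b := mul_comm _ _
        _ ≤ a * b := Nat.mul_le_mul_right b hda
        _ = c * d := hcd.symm
    exact Nat.le_of_mul_le_mul_right h hd0
  have hac : a ≤ c := by
    have h : a * d ≤ c * d := by
      calc a * d ≤ a * b := Nat.mul_le_mul_left a hdb
        _ = c * d := hcd.symm
    exact Nat.le_of_mul_le_mul_right h hd0
  have hcd' : (c : ℤ) * d = a * b := by exact_mod_cast hcd
  rcases le_or_gt x d with h1 | h1
  · -- x ≤ d: all subtractions genuine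
    have hxa : x ≤ a := h1.trans hda
    have hxb : x ≤ b := h1.trans hdb
    have hxc : x ≤ c := h1.trans (hda.trans hac)
    zify [hxa, hxb, hxc, h1]
    nlinarith [mul_nonneg (sub_nonneg.mpr (show (d:ℤ) ≤ b by exact_mod_cast hdb))
      (sub_nonneg.mpr (show (1:ℤ) ≤ x by exact_mod_cast hx))]
  · rcases le_or_gt x b with h2 | h2
    · rcases le_or_gt x a with h3 | h3
      · -- d < x ≤ a, x ≤ b
        have hxc : x ≤ c := h3.trans hac
        rw [Nat.sub_eq_zero_of_le h1.le]
        zify [h2, h3, hxc]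
        have hbd : (0:ℤ) ≤ (b:ℤ) - d := sub_nonneg.mpr (by exact_mod_cast hdb)
        have hxd : (0:ℤ) ≤ (x:ℤ) - (d + 1) :=
          sub_nonneg.mpr (by exact_mod_cast (h1 : d + 1 ≤ x))
        nlinarith [mul_nonneg hbd hxd,
          mul_nonneg hbd (show (0:ℤ) ≤ (d:ℤ) - 1 by
            have : (1:ℤ) ≤ d := by exact_mod_cast hd0
            linarith)]
      · -- x > a, x ≤ b (so a < b), LHS = b - x
        have hxc : x ≤ c := h2.trans hbc
        rw [Nat.sub_eq_zero_of_le h3.le, Nat.sub_eq_zero_of_le h1.le, mul_zero]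
        zify [h2, hxc]
        have hd1 : (1:ℤ) ≤ d := by exact_mod_cast hd0
        have hcx : (0:ℤ) ≤ (c:ℤ) - x := sub_nonneg.mpr (by exact_mod_cast hxc)
        have hbcz : (b:ℤ) ≤ c := by exact_mod_cast hbc
        nlinarith [mul_le_mul_of_nonneg_right hd1 hcx]
    · rcases le_or_gt x a with h3 | h3
      · -- d < x, b < x, x ≤ a
        have hxc : x ≤ c := h3.trans hac
        rw [Nat.sub_eq_zero_of_le h2.le, Nat.sub_eq_zero_of_le h1.le, add_zero, add_zero]
        zify [h3, hxc]
        have hdbz : (d:ℤ) ≤ b := by exact_mod_cast hdb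
        have hxz : (0:ℤ) ≤ x := by positivity
        nlinarith [mul_le_mul_of_nonneg_right hdbz hxz]
      · -- x > a, b, d : LHS = 0
        rw [Nat.sub_eq_zero_of_le h3.le, Nat.sub_eq_zero_of_le h2.le, mul_zero]
        exact Nat.zero_le _

private lemma keyU (a b c d : ℕ) (hd2 : 2 ≤ d) (hda : d ≤ a) (hdb : d ≤ b)
    (hcd : c * d = a * b) :
    a.factorial ^ b * b.factorial ≤ c.factorial ^ d * d.factorial := by
  have hd0 : 0 < d := by omega
  have hbc : b ≤ c := by
    have h : b * d ≤ c * d := by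
      calc b * d = d * b := mul_comm _ _
        _ ≤ a * b := Nat.mul_le_mul_right b hda
        _ = c * d := hcd.symm
    exact Nat.le_of_mul_le_mul_right h hd0
  have hac : a ≤ c := by
    have h : a * d ≤ c * d := by
      calc a * d ≤ a * b := Nat.mul_le_mul_left a hdb
        _ = c * d := hcd.symm
    exact Nat.le_of_mul_le_mul_right h hd0
  set X := c + 1 with hX
  set P : ℕ → ℕ := fun n => ∏ i ∈ range X, (i + 2) ^ (n - (i + 1)) with hP
  set Q : ℕ → ℕ := fun n => ∏ i ∈ range X, (i + 1) ^ (n - (i + 1)) with hQ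
  have hQpos : ∀ n, 0 < Q n := fun n => prod_pos fun i _ => pow_pos (by omega) _
  have hident : ∀ n, n ≤ X → P n = n.factorial * Q n := fun n h => ident n X h
  have e1 : ∀ n k : ℕ, ∏ i ∈ range X, (i + 2) ^ (k * (n - (i + 1))) = (P n) ^ k := by
    intro n k
    rw [hP, ← prod_pow]
    exact prod_congr rfl fun i _ => by rw [← pow_mul, mul_comm]
  have e2 : ∀ n k : ℕ, ∏ i ∈ range X, (i + 1) ^ (k * (n - (i + 1))) = (Q n) ^ k := by
    intro n k
    rw [hQ, ← prod_pow]
    exact prod_congr rfl fun i _ => by rw [← pow_mul, mul_comm]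
  have eP : ∀ u v : ℕ,
      (∏ i ∈ range X, (i + 2) ^ (v * (u - (i + 1)) + (v - (i + 1)))) = (P u) ^ v * P v := by
    intro u v
    have h1 : ∀ i ∈ range X, (i + 2) ^ (v * (u - (i + 1)) + (v - (i + 1))) =
        (i + 2) ^ (v * (u - (i + 1))) * (i + 2) ^ (v - (i + 1)) := fun i _ => pow_add _ _ _
    rw [prod_congr rfl h1, prod_mul_distrib, e1]
  have eQ : ∀ u v : ℕ,
      (∏ i ∈ range X, (i + 1) ^ (v * (u - (i + 1)) + (v - (i + 1)))) = (Q u) ^ v * Q v := by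
    intro u v
    have h1 : ∀ i ∈ range X, (i + 1) ^ (v * (u - (i + 1)) + (v - (i + 1))) =
        (i + 1) ^ (v * (u - (i + 1))) * (i + 1) ^ (v - (i + 1)) := fun i _ => pow_add _ _ _
    rw [prod_congr rfl h1, prod_mul_distrib, e2]
  have main :
      (∏ i ∈ range X, ((i + 2) ^ (b * (a - (i + 1)) + (b - (i + 1))) *
        (i + 1) ^ (d * (c - (i + 1)) + (d - (i + 1)))))
      ≤ ∏ i ∈ range X, ((i + 2) ^ (d * (c - (i + 1)) + (d - (i + 1))) *
        (i + 1) ^ (b * (a - (i + 1)) + (b - (i + 1)))) := by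
    apply Finset.prod_le_prod'
    intro i _
    have hdom := dom a b c d (i + 1) hd2 hda hdb hcd (by omega)
    obtain ⟨δ, hδ⟩ : ∃ δ, d * (c - (i + 1)) + (d - (i + 1)) =
        (b * (a - (i + 1)) + (b - (i + 1))) + δ := ⟨_, (Nat.add_sub_cancel' hdom).symm⟩
    rw [hδ]
    exact termwise (i + 1) (i + 2) _ δ (by omega)
  rw [prod_mul_distrib, prod_mul_distrib, eP a b, eP c d, eQ a b, eQ c d,
      hident a (by omega), hident b (by omega), hident c (by omega), hident d (by omega)]
    at main
  have hK : 0 < (Q a) ^ b * Q b * ((Q c) ^ d * Q d) := by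
    have := hQpos a; have := hQpos b; have := hQpos c; have := hQpos d
    positivity
  have eL : ((a.factorial * Q a) ^ b * (b.factorial * Q b)) * ((Q c) ^ d * Q d) =
      (a.factorial ^ b * b.factorial) * ((Q a) ^ b * Q b * ((Q c) ^ d * Q d)) := by
    rw [mul_pow]; ring
  have eR : ((c.factorial * Q c) ^ d * (d.factorial * Q d)) * ((Q a) ^ b * Q b) =
      (c.factorial ^ d * d.factorial) * ((Q a) ^ b * Q b * ((Q c) ^ d * Q d)) := by
    rw [mul_pow]; ring
  rw [eL, eR] at main
  exact Nat.le_of_mul_le_mul_right main hK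

/-- Maróti's Lemma 2.1: if `m = a * b ≥ 8` with `a, b ≥ 2` and `p` is the smallest
prime divisor of `m`, then `m! / (((m/p)!)^p * p!) ≤ m! / ((a!)^b * b!)`. -/
theorem stmt_5 (m a b : ℕ) (hm : m = a * b) (hm8 : 8 ≤ m) (ha : 2 ≤ a) (hb : 2 ≤ b) :
    Nat.factorial m / ((Nat.factorial (m / m.minFac)) ^ m.minFac * Nat.factorial m.minFac)
      ≤ Nat.factorial m / ((Nat.factorial a) ^ b * Nat.factorial b) := by
  have hp : m.minFac.Prime := Nat.minFac_prime (by omega)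
  have hpm : m.minFac ∣ m := Nat.minFac_dvd m
  have hcd : (m / m.minFac) * m.minFac = a * b := by
    rw [Nat.div_mul_cancel hpm, hm]
  have hpa : m.minFac ≤ a := by
    have h1 : a.minFac ∣ m := (Nat.minFac_dvd a).trans ⟨b, hm⟩
    exact (Nat.minFac_le_of_dvd (Nat.minFac_prime (by omega : a ≠ 1)).two_le h1).trans
      (Nat.minFac_le (by omega))
  have hpb : m.minFac ≤ b := by
    have h1 : b.minFac ∣ m := (Nat.minFac_dvd b).trans ⟨a, by rw [hm, mul_comm]⟩
    exact (Nat.minFac_le_of_dvd (Nat.minFac_prime (by omega : b ≠ 1)).two_le h1).trans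
      (Nat.minFac_le (by omega))
  have key := keyU a b (m / m.minFac) m.minFac hp.two_le hpa hpb hcd
  exact Nat.div_le_div_left key (by positivity)
end

section
/- For every integer t ≥ 3 and all integers a, b ≥ 2 with a·b = 2^t, one has (2^t)! / (((2^(t−1))!)^2 · 2) ≤ (2^t)! / ((a!)^b · b!); that is, among all factorizations 2^t = ab with a, b > 1, the quantity w(a, b) = (2^t)!/((a!)^b · b!) attains its minimum at a = 2^(t−1), b = 2. -/
/-- `m^k ≤ C(m*k, k)` for `m ≥ 1`. -/
lemma aux_pow_le_choose (m : ℕ) (hm : 1 ≤ m) : ∀ k : ℕ, m ^ k ≤ Nat.choose (m * k) k := by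
  intro k
  induction k with
  | zero => simp
  | succ k ih =>
    have hmk : m * (k + 1) = m * k + m := by ring
    have hn : m * (k + 1) = (m * k + (m - 1)) + 1 := by omega
    have key : Nat.choose ((m * k + (m - 1)) + 1) (k + 1) * (k + 1)
        = ((m * k + (m - 1)) + 1) * Nat.choose (m * k + (m - 1)) k :=
      (Nat.add_one_mul_choose_eq _ _).symm
    have h2 : Nat.choose (m * k) k ≤ Nat.choose (m * k + (m - 1)) k :=
      Nat.choose_le_choose _ (Nat.le_add_right _ _)
    have h3 : m ^ (k + 1) * (k + 1) ≤ Nat.choose (m * (k + 1)) (k + 1) * (k + 1) := by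
      rw [hn, key]
      have : (m * k + (m - 1)) + 1 = m * (k + 1) := by omega
      rw [this]
      calc m ^ (k + 1) * (k + 1) = m ^ k * (m * (k + 1)) := by ring
        _ ≤ Nat.choose (m * k) k * (m * (k + 1)) := Nat.mul_le_mul_right _ ih
        _ ≤ Nat.choose (m * k + (m - 1)) k * (m * (k + 1)) := Nat.mul_le_mul_right _ h2
        _ = m * (k + 1) * Nat.choose (m * k + (m - 1)) k := by ring
    exact Nat.le_of_mul_le_mul_right h3 (Nat.succ_pos k)

/-- key step bound: `2*(c+1) ≤ C(a*(c+1), a)` for `a ≥ 2`, `c ≥ 1`. -/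
lemma aux_choose_lb (a c : ℕ) (ha : 2 ≤ a) (hc : 1 ≤ c) :
    2 * (c + 1) ≤ Nat.choose (a * (c + 1)) a := by
  have h1 : (c + 1) ^ a ≤ Nat.choose ((c + 1) * a) a := aux_pow_le_choose (c + 1) (by omega) a
  have h2 : 2 * (c + 1) ≤ (c + 1) ^ a := by
    calc 2 * (c + 1) ≤ (c + 1) * (c + 1) := by nlinarith
      _ = (c + 1) ^ 2 := by ring
      _ ≤ (c + 1) ^ a := Nat.pow_le_pow_right (by omega) ha
  rw [mul_comm] at h1
  omega

/-- Main combinatorial inequality: for `a ≥ 2`, `c ≥ 1`,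
`(a!)^(2c) * (2c)! ≤ ((a*c)!)^2 * 2`. -/
lemma aux_main (a : ℕ) (ha : 2 ≤ a) : ∀ c : ℕ, 1 ≤ c →
    (Nat.factorial a) ^ (2 * c) * Nat.factorial (2 * c)
      ≤ (Nat.factorial (a * c)) ^ 2 * 2 := by
  intro c
  induction c with
  | zero => omega
  | succ c ih =>
    intro _
    rcases Nat.eq_or_lt_of_le (Nat.one_le_iff_ne_zero.mpr (Nat.succ_ne_zero c)) with h | h
    · -- c + 1 = 1
      have hc0 : c = 0 := by omega
      subst hc0
      norm_num [Nat.factorial]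
    · have hc : 1 ≤ c := by omega
      have IH := ih hc
      -- (a*(c+1))! = C(a*(c+1), a) * a! * (a*c)!
      have hfact : Nat.choose (a * (c + 1)) a * Nat.factorial a * Nat.factorial (a * c)
          = Nat.factorial (a * (c + 1)) := by
        have hle : a ≤ a * (c + 1) := Nat.le_mul_of_pos_right a (by omega)
        have hsub : a * (c + 1) - a = a * c := by ring_nf; omega
        have := Nat.choose_mul_factorial_mul_factorial hle
        rw [hsub] at this
        exact this
      set C := Nat.choose (a * (c + 1)) a with hC
      have hClb : 2 * (c + 1) ≤ C := aux_choose_lb a c ha hc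
      have hCsq : (2 * c + 1) * (2 * c + 2) ≤ C ^ 2 := by
        calc (2 * c + 1) * (2 * c + 2) ≤ (2 * c + 2) * (2 * c + 2) := by nlinarith
          _ = (2 * (c + 1)) ^ 2 := by ring
          _ ≤ C ^ 2 := Nat.pow_le_pow_left hClb 2
      have hfac2 : Nat.factorial (2 * (c + 1))
          = (2 * c + 1) * (2 * c + 2) * Nat.factorial (2 * c) := by
        have : 2 * (c + 1) = (2 * c + 1) + 1 := by ring
        rw [this, Nat.factorial_succ, Nat.factorial_succ]
        ring
      calc (Nat.factorial a) ^ (2 * (c + 1)) * Nat.factorial (2 * (c + 1))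
          = (Nat.factorial a) ^ 2 * ((2 * c + 1) * (2 * c + 2))
              * ((Nat.factorial a) ^ (2 * c) * Nat.factorial (2 * c)) := by
            rw [hfac2]; ring
        _ ≤ (Nat.factorial a) ^ 2 * (C ^ 2)
              * ((Nat.factorial a) ^ (2 * c) * Nat.factorial (2 * c)) :=
            Nat.mul_le_mul_right _ (Nat.mul_le_mul_left _ hCsq)
        _ ≤ (Nat.factorial a) ^ 2 * (C ^ 2) * ((Nat.factorial (a * c)) ^ 2 * 2) :=
            Nat.mul_le_mul_left _ IH
        _ = (C * Nat.factorial a * Nat.factorial (a * c)) ^ 2 * 2 := by ring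
        _ = (Nat.factorial (a * (c + 1))) ^ 2 * 2 := by rw [hfact]

/-- For every `t ≥ 3` and all `a, b ≥ 2` with `a * b = 2^t`,
`(2^t)! / (((2^(t-1))!)^2 * 2) ≤ (2^t)! / ((a!)^b * b!)`. -/
theorem stmt_6 (t a b : ℕ) (ht : 3 ≤ t) (ha : 2 ≤ a) (hb : 2 ≤ b) (hab : a * b = 2 ^ t) :
    Nat.factorial (2 ^ t) / ((Nat.factorial (2 ^ (t - 1))) ^ 2 * 2)
      ≤ Nat.factorial (2 ^ t) / ((Nat.factorial a) ^ b * Nat.factorial b) := by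
  -- b divides 2^t, so b is a power of 2, hence even
  have hbdvd : b ∣ 2 ^ t := Dvd.intro_left a hab
  obtain ⟨k, hkt, hbk⟩ := (Nat.dvd_prime_pow Nat.prime_two).mp hbdvd
  have hk1 : 1 ≤ k := by
    by_contra h
    interval_cases k <;> omega
  have hbeven : b = 2 * 2 ^ (k - 1) := by
    rw [hbk]
    rw [← pow_succ']
    congr 1
    omega
  set c := 2 ^ (k - 1) with hc
  have hc1 : 1 ≤ c := Nat.one_le_two_pow
  have hac : a * c = 2 ^ (t - 1) := by
    have h2 : 2 * (a * c) = 2 * 2 ^ (t - 1) := by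
      have : 2 ^ t = 2 * 2 ^ (t - 1) := by
        rw [← pow_succ']
        congr 1
        omega
      rw [← this, ← hab, hbeven]
      ring
    omega
  have hkey : (Nat.factorial a) ^ b * Nat.factorial b
      ≤ (Nat.factorial (2 ^ (t - 1))) ^ 2 * 2 := by
    rw [hbeven, ← hac]
    exact aux_main a ha c hc1
  exact Nat.div_le_div_left hkey (by positivity)
end

section
/- There exists a natural number N such that for every natural number x ≥ N, there is a prime p with x ≤ p and 5·p ≤ 6·x; that is, for every large enough positive integer x there is a prime in the interval [x, (6/5)·x]. -/
open Finset ArithmeticFunction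

noncomputable def psi (N : ℕ) : ℝ := ∑ n ∈ Finset.Icc 1 N, Λ n
noncomputable def T (N : ℕ) : ℝ := Real.log (Nat.factorial N)
noncomputable def S (N : ℕ) : ℝ := T N + T (N/30) - T (N/2) - T (N/3) - T (N/5)
def gZ (m : ℕ) : ℤ := (m : ℤ) - (m / 2 : ℕ) - (m / 3 : ℕ) - (m / 5 : ℕ) + (m / 30 : ℕ)

theorem T_eq (N : ℕ) : T N = ∑ n ∈ Finset.Icc 1 N, Λ n * (N / n : ℕ) := by
  have h1 : T N = ∑ m ∈ Finset.Icc 1 N, Real.log m := by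
    unfold T
    induction N with
    | zero => simp
    | succ n ih =>
      rw [Nat.factorial_succ, Nat.cast_mul, Real.log_mul (by positivity)
        (Nat.cast_ne_zero.mpr n.factorial_ne_zero),
        Finset.sum_Icc_succ_top (by omega), ih, add_comm]
  have hIoc : Finset.Icc 1 N = Finset.Ioc 0 N := by ext x; simp; omega
  rw [h1, Finset.sum_congr rfl (fun m _ => (vonMangoldt_sum (n := m)).symm)]
  rw [Finset.sum_comm' (t' := Finset.Icc 1 N)
    (s' := fun d => (Finset.Icc 1 N).filter (fun m => d ∣ m))]
  · refine Finset.sum_congr rfl (fun d _ => ?_)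
    rw [Finset.sum_const, hIoc, Nat.Ioc_filter_dvd_card_eq_div]
    simp [mul_comm]
  · intro m d
    simp only [Finset.mem_Icc, Nat.mem_divisors, Finset.mem_filter]
    constructor
    · intro h
      have h5 := Nat.le_of_dvd (Nat.pos_of_ne_zero h.2.2) h.2.1
      have h6 := Nat.pos_of_dvd_of_pos h.2.1 (Nat.pos_of_ne_zero h.2.2)
      have h7 := h.1.2
      exact ⟨⟨h.1, h.2.1⟩, by omega, by omega⟩
    · intro h
      have h8 := h.1.1.1
      exact ⟨h.1.1, h.1.2, by omega⟩


theorem T_div_eq (N d : ℕ) (hd : 0 < d) :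
    T (N / d) = ∑ n ∈ Finset.Icc 1 N, Λ n * ((N / n) / d : ℕ) := by
  rw [T_eq]
  rw [Finset.sum_subset (Finset.Icc_subset_Icc_right (Nat.div_le_self N d))]
  · refine Finset.sum_congr rfl (fun n hn => ?_)
    rw [Nat.div_div_eq_div_mul, Nat.div_div_eq_div_mul, Nat.mul_comm]
  · intro x hx hnx
    simp only [Finset.mem_Icc] at hx hnx
    have : N / d < x := by omega
    rw [Nat.div_eq_of_lt this]
    simp

theorem gZ_cast (m : ℕ) : ((gZ m : ℤ) : ℝ)
    = (m:ℝ) - ((m/2 : ℕ):ℝ) - ((m/3:ℕ):ℝ) - ((m/5:ℕ):ℝ) + ((m/30:ℕ):ℝ) := by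
  unfold gZ
  simp only [Int.cast_add, Int.cast_sub, Int.cast_natCast]

theorem S_eq (N : ℕ) : S N = ∑ n ∈ Finset.Icc 1 N, Λ n * (gZ (N / n) : ℝ) := by
  unfold S
  rw [T_eq, T_div_eq N 30 (by norm_num), T_div_eq N 2 (by norm_num),
    T_div_eq N 3 (by norm_num), T_div_eq N 5 (by norm_num)]
  rw [← Finset.sum_add_distrib, ← Finset.sum_sub_distrib, ← Finset.sum_sub_distrib,
    ← Finset.sum_sub_distrib]
  refine Finset.sum_congr rfl (fun n hn => ?_)
  rw [gZ_cast]
  ring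

theorem S_le_psi (N : ℕ) : S N ≤ psi N := by
  rw [S_eq]
  refine Finset.sum_le_sum (fun n hn => ?_)
  calc Λ n * (gZ (N/n) : ℝ) ≤ Λ n * 1 := by
        apply mul_le_mul_of_nonneg_left _ vonMangoldt_nonneg
        exact_mod_cast gZ_le_one _
    _ = Λ n := mul_one _
  where
  gZ_le_one (m : ℕ) : gZ m ≤ 1 := by unfold gZ; omega

theorem icc_eq_ioc (x : ℕ) : Finset.Icc 1 x = Finset.Ioc 0 x := by ext n; simp; omega

theorem psi_split {a b : ℕ} (h : a ≤ b) : ∑ n ∈ Finset.Ioc a b, Λ n = psi b - psi a := by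
  have := Finset.sum_Ioc_consecutive (fun n : ℕ => Λ n) (Nat.zero_le a) h
  unfold psi
  rw [icc_eq_ioc, icc_eq_ioc]
  linarith

theorem filter_eq (N : ℕ) :
    (Finset.Icc 1 N).filter (fun n => (1 ≤ N/n ∧ N/n ≤ 5) ∨ (7 ≤ N/n ∧ N/n ≤ 9))
      = Finset.Ioc (N/6) N ∪ Finset.Ioc (N/10) (N/7) := by
  ext n
  simp only [Finset.mem_filter, Finset.mem_Icc, Finset.mem_union, Finset.mem_Ioc]
  by_cases hn : 0 < n
  · have e1 : 1 ≤ N / n ↔ n ≤ N := Nat.one_le_div_iff hn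
    have e2 : N / n < 6 ↔ N < 6 * n := Nat.div_lt_iff_lt_mul hn
    have e2' : N / n ≤ 5 ↔ N < 6 * n := by rw [← e2]; omega
    have e3 : 7 ≤ N / n ↔ 7 * n ≤ N := Nat.le_div_iff_mul_le hn
    have e3' : 7 ≤ N / n ↔ 7 * n ≤ N := by rw [e3]
    have e4 : N / n < 10 ↔ N < 10 * n := Nat.div_lt_iff_lt_mul hn
    have e4' : N / n ≤ 9 ↔ N < 10 * n := by rw [← e4]; omega
    have e5 : N / 6 < n ↔ N < n * 6 := Nat.div_lt_iff_lt_mul (by norm_num)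
    have e6 : n ≤ N / 7 ↔ n * 7 ≤ N := Nat.le_div_iff_mul_le (by norm_num)
    have e7 : N / 10 < n ↔ N < n * 10 := Nat.div_lt_iff_lt_mul (by norm_num)
    rw [e1, e2', e3', e4', e5, e6, e7]
    omega
  · interval_cases n
    simp

theorem psi_rec (N : ℕ) : psi N - psi (N/6) + psi (N/7) - psi (N/10) ≤ S N := by
  have hdisj : Disjoint (Finset.Ioc (N/6) N) (Finset.Ioc (N/10) (N/7)) := by
    rw [Finset.disjoint_left]
    intro a ha hb
    simp only [Finset.mem_Ioc] at ha hb
    have : N / 7 ≤ N / 6 := Nat.div_le_div_left (by norm_num) (by norm_num)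
    omega
  have key : ∑ n ∈ Finset.Ioc (N/6) N ∪ Finset.Ioc (N/10) (N/7), Λ n
      ≤ ∑ n ∈ Finset.Icc 1 N, Λ n * (gZ (N/n) : ℝ) := by
    rw [← filter_eq]
    have heq : ∀ n ∈ (Finset.Icc 1 N).filter
        (fun n => (1 ≤ N/n ∧ N/n ≤ 5) ∨ (7 ≤ N/n ∧ N/n ≤ 9)),
        Λ n = Λ n * (gZ (N/n) : ℝ) := by
      intro n hn
      simp only [Finset.mem_filter] at hn
      rw [gZ_eq_one hn.2]
      norm_num
    rw [Finset.sum_congr rfl heq]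
    refine Finset.sum_le_sum_of_subset_of_nonneg (Finset.filter_subset _ _) ?_
    intro i _ _
    have h0 : (0:ℤ) ≤ gZ (N/i) := gZ_nonneg _
    have : (0:ℝ) ≤ (gZ (N/i) : ℝ) := by exact_mod_cast h0
    exact mul_nonneg vonMangoldt_nonneg this
  rw [Finset.sum_union hdisj, psi_split (Nat.div_le_self N 6),
    psi_split (Nat.div_le_div_left (by norm_num : 7 ≤ 10) (by norm_num))] at key
  rw [S_eq]
  linarith
  where
  gZ_eq_one {m : ℕ} (h : (1 ≤ m ∧ m ≤ 5) ∨ (7 ≤ m ∧ m ≤ 9)) : gZ m = 1 := by unfold gZ; omega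
  gZ_nonneg (m : ℕ) : 0 ≤ gZ m := by unfold gZ; omega


theorem log_ge_one_sub_inv {x : ℝ} (hx : 0 < x) : 1 - 1/x ≤ Real.log x := by
  have h := Real.log_le_sub_one_of_pos (show (0:ℝ) < 1/x by positivity)
  rw [Real.log_div one_ne_zero hx.ne', Real.log_one] at h
  linarith

theorem T_ge (n : ℕ) (hn : 1 ≤ n) : (n:ℝ) * Real.log n - n + 1 ≤ T n := by
  induction n with
  | zero => omega
  | succ m ih =>
    rcases Nat.eq_or_lt_of_le hn with h | h
    · simp [T, ← h]
    · have hm : 1 ≤ m := by omega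
      have ihm := ih hm
      have hT : T (m+1) = T m + Real.log (m+1) := by
        unfold T
        rw [Nat.factorial_succ, Nat.cast_mul, Real.log_mul (by positivity)
          (Nat.cast_ne_zero.mpr m.factorial_ne_zero)]
        push_cast
        ring
      have hmpos : (0:ℝ) < m := by exact_mod_cast hm
      have hkey : (m:ℝ) * (Real.log (m+1) - Real.log m) ≤ 1 := by
        have h1 : Real.log ((m+1)/m) ≤ (m+1)/m - 1 :=
          Real.log_le_sub_one_of_pos (by positivity)
        rw [Real.log_div (by positivity) hmpos.ne'] at h1
        have h2 : ((m:ℝ)+1)/m - 1 = 1/m := by field_simp; ring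
        rw [h2] at h1
        calc (m:ℝ) * (Real.log (m+1) - Real.log m) ≤ (m:ℝ) * (1/m) :=
          mul_le_mul_of_nonneg_left h1 hmpos.le
        _ = 1 := by field_simp
      rw [hT]
      push_cast
      nlinarith [Real.log_nonneg (show (1:ℝ) ≤ (m:ℝ)+1 by linarith)]

theorem T_le (n : ℕ) (hn : 1 ≤ n) : T n ≤ (n:ℝ) * Real.log n - n + 1 + Real.log n := by
  induction n with
  | zero => omega
  | succ m ih =>
    rcases Nat.eq_or_lt_of_le hn with h | h
    · simp [T, ← h]
    · have hm : 1 ≤ m := by omega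
      have ihm := ih hm
      have hT : T (m+1) = T m + Real.log (m+1) := by
        unfold T
        rw [Nat.factorial_succ, Nat.cast_mul, Real.log_mul (by positivity)
          (Nat.cast_ne_zero.mpr m.factorial_ne_zero)]
        push_cast
        ring
      have hmpos : (0:ℝ) < m := by exact_mod_cast hm
      have hkey : 1 ≤ ((m:ℝ)+1) * (Real.log (m+1) - Real.log m) := by
        have h1 : 1 - 1/((m+1)/m : ℝ) ≤ Real.log ((m+1)/m) :=
          log_ge_one_sub_inv (by positivity)
        rw [Real.log_div (by positivity) hmpos.ne'] at h1
        have h2 : 1 - 1/(((m:ℝ)+1)/m) = 1/(m+1) := by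
          rw [one_div_div]; field_simp; ring
        rw [h2] at h1
        calc (1:ℝ) = ((m:ℝ)+1) * (1/(m+1)) := by field_simp
        _ ≤ ((m:ℝ)+1) * (Real.log (m+1) - Real.log m) :=
          mul_le_mul_of_nonneg_left h1 (by positivity)
      rw [hT]
      push_cast
      nlinarith

theorem fdiff {a b : ℝ} (ha : 1 ≤ a) (hab : a ≤ b) :
    0 ≤ (b*Real.log b - b) - (a*Real.log a - a) ∧
    (b*Real.log b - b) - (a*Real.log a - a) ≤ (b-a)*Real.log b := by
  have ha0 : (0:ℝ) < a := by linarith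
  have hb0 : (0:ℝ) < b := by linarith
  have h1 : Real.log b - Real.log a ≤ b/a - 1 := by
    rw [← Real.log_div hb0.ne' ha0.ne']
    exact Real.log_le_sub_one_of_pos (by positivity)
  have h2 : 1 - a/b ≤ Real.log b - Real.log a := by
    rw [← Real.log_div hb0.ne' ha0.ne']
    have h := log_ge_one_sub_inv (show (0:ℝ) < b/a by positivity)
    have : 1/((b:ℝ)/a) = a/b := by field_simp
    rwa [this] at h
  have hla : 0 ≤ Real.log a := Real.log_nonneg ha
  have hlab : Real.log a ≤ Real.log b := Real.log_le_log ha0 hab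
  constructor
  · have k1 : b * (1 - a/b) ≤ b * (Real.log b - Real.log a) :=
      mul_le_mul_of_nonneg_left h2 hb0.le
    have k2 : b * (1 - a/b) = b - a := by field_simp
    nlinarith
  · have k1 : a * (Real.log b - Real.log a) ≤ a * (b/a - 1) :=
      mul_le_mul_of_nonneg_left h1 ha0.le
    have k2 : a * (b/a - 1) = b - a := by field_simp
    nlinarith

noncomputable def Ac : ℝ :=
  Real.log 2 / 2 + Real.log 3 / 3 + Real.log 5 / 5 - Real.log 30 / 30

theorem log30_eq : Real.log 30 = Real.log 2 + Real.log 3 + Real.log 5 := by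
  rw [show (30:ℝ) = 2*3*5 by norm_num, Real.log_mul (by norm_num) (by norm_num),
    Real.log_mul (by norm_num) (by norm_num)]

theorem Ac_pos : 0 < Ac := by
  unfold Ac
  rw [log30_eq]
  have h2 := Real.log_pos (show (1:ℝ) < 2 by norm_num)
  have h3 := Real.log_pos (show (1:ℝ) < 3 by norm_num)
  have h5 := Real.log_pos (show (1:ℝ) < 5 by norm_num)
  linarith

theorem log2_lt : Real.log 2 < 0.6931471808 := Real.log_two_lt_d9.trans_le (by norm_num)

theorem log3_le : Real.log 3 ≤ 1.1932 := by
  have h : Real.log 3 = Real.log 2 + Real.log (3/2) := by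
    rw [← Real.log_mul (by norm_num) (by norm_num)]; norm_num
  have h2 : Real.log (3/2 : ℝ) ≤ 3/2 - 1 := Real.log_le_sub_one_of_pos (by norm_num)
  have := log2_lt
  rw [h]; linarith

theorem log5_le : Real.log 5 ≤ 1.6364 := by
  have h : Real.log 5 = Real.log 4 + Real.log (5/4) := by
    rw [← Real.log_mul (by norm_num) (by norm_num)]; norm_num
  have h4 : Real.log 4 = 2 * Real.log 2 := by
    rw [show (4:ℝ) = 2^2 by norm_num, Real.log_pow]; norm_num
  have h2 : Real.log (5/4 : ℝ) ≤ 5/4 - 1 := Real.log_le_sub_one_of_pos (by norm_num)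
  have := log2_lt
  rw [h, h4]; linarith

theorem Ac_le_one : Ac ≤ 1 := by
  unfold Ac
  have h30 : Real.log 30 ≥ 4 * Real.log 2 := by
    have : Real.log 16 ≤ Real.log 30 := Real.log_le_log (by norm_num) (by norm_num)
    rw [show (16:ℝ) = 2^4 by norm_num, Real.log_pow] at this
    push_cast at this
    linarith
  have hl2 : (0:ℝ) < Real.log 2 := Real.log_pos (by norm_num)
  have := log2_lt
  have := log3_le
  have := log5_le
  nlinarith

theorem main_id (x : ℝ) (hx : 0 < x) :
    (x/1 * Real.log (x/1) - x/1) + (x/30 * Real.log (x/30) - x/30)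
    - (x/2 * Real.log (x/2) - x/2) - (x/3 * Real.log (x/3) - x/3)
    - (x/5 * Real.log (x/5) - x/5) = Ac * x := by
  rw [div_one, Real.log_div hx.ne' (by norm_num : (30:ℝ) ≠ 0),
    Real.log_div hx.ne' (by norm_num : (2:ℝ) ≠ 0),
    Real.log_div hx.ne' (by norm_num : (3:ℝ) ≠ 0),
    Real.log_div hx.ne' (by norm_num : (5:ℝ) ≠ 0)]
  unfold Ac
  ring

theorem T_approx (N d : ℕ) (hd : 1 ≤ d) (hdN : d ≤ N) :
    T (N/d) ≤ ((N:ℝ)/d * Real.log ((N:ℝ)/d) - (N:ℝ)/d) + (2 + 2*Real.log (N+1)) ∧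
    ((N:ℝ)/d * Real.log ((N:ℝ)/d) - (N:ℝ)/d) - (2 + 2*Real.log (N+1)) ≤ T (N/d) := by
  set m := N / d with hm
  set y := (N:ℝ)/d with hy
  have hd0 : (0:ℝ) < d := by exact_mod_cast hd
  have hm1 : 1 ≤ m := (Nat.one_le_div_iff (by omega)).mpr hdN
  have hmy : (m:ℝ) ≤ y := Nat.cast_div_le
  have hym : y < (m:ℝ) + 1 := by
    have h1 := Nat.div_add_mod N d
    have h2 : N % d < d := Nat.mod_lt _ (by omega)
    have h3 : N < d * m + d := by
      conv_lhs => rw [← h1]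
      exact Nat.add_lt_add_left h2 _
    have h4 : (N:ℝ) < d * m + d := by exact_mod_cast h3
    rw [hy, div_lt_iff₀ hd0]
    linarith
  have hm1R : (1:ℝ) ≤ (m:ℝ) := by exact_mod_cast hm1
  have hy1 : (1:ℝ) ≤ y := le_trans hm1R hmy
  have hyN : y ≤ (N:ℝ) := by
    rw [hy, div_le_iff₀ hd0]
    have hd1R : (1:ℝ) ≤ (d:ℝ) := by exact_mod_cast hd
    nlinarith [Nat.cast_nonneg (α := ℝ) N]
  have hlogm : Real.log m ≤ Real.log (N+1) := by
    apply Real.log_le_log (by linarith)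
    linarith
  have hlogy : Real.log y ≤ Real.log (N+1) := by
    apply Real.log_le_log (by linarith)
    linarith
  have hlogy0 : 0 ≤ Real.log y := Real.log_nonneg hy1
  have hst1 := T_ge m hm1
  have hst2 := T_le m hm1
  have hfd := fdiff hm1R hmy
  have hfd2 : ((y*Real.log y - y) - ((m:ℝ)*Real.log m - m)) ≤ (y - m)*Real.log y := hfd.2
  have hfd1 : 0 ≤ (y*Real.log y - y) - ((m:ℝ)*Real.log m - m) := hfd.1
  have hd3 : (y - (m:ℝ))*Real.log y ≤ Real.log (N+1) := by
    have : (y - (m:ℝ)) ≤ 1 := by linarith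
    nlinarith
  constructor <;> nlinarith

theorem T_mono {a b : ℕ} (h : a ≤ b) : T a ≤ T b := by
  unfold T
  apply Real.log_le_log (by exact_mod_cast a.factorial_pos)
  exact_mod_cast Nat.factorial_le h

theorem T_nonneg (n : ℕ) : 0 ≤ T n := by
  unfold T
  apply Real.log_nonneg
  exact_mod_cast n.factorial_pos

theorem T29 : T 29 ≤ 77 := by
  have h := T_le 29 (by norm_num)
  have hl : Real.log 29 ≤ 3.47 := by
    have h1 : Real.log 29 ≤ Real.log 32 := Real.log_le_log (by norm_num) (by norm_num)
    rw [show (32:ℝ) = 2^5 by norm_num, Real.log_pow] at h1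
    push_cast at h1
    have := log2_lt
    linarith
  have : (29:ℝ) * Real.log 29 ≤ 29 * 3.47 := by nlinarith
  push_cast at h
  linarith

theorem S_error (N : ℕ) : |S N - Ac * N| ≤ 600 + 10 * Real.log (N+1) := by
  have hlog0 : 0 ≤ Real.log (N+1) := Real.log_nonneg (by push_cast; linarith [Nat.cast_nonneg (α := ℝ) N])
  rcases le_or_gt 30 N with h30 | h30
  · have hN0 : (0:ℝ) < N := by exact_mod_cast (by omega : 0 < N)
    have h1 := T_approx N 1 (by norm_num) (by omega)
    have h2 := T_approx N 2 (by norm_num) (by omega)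
    have h3 := T_approx N 3 (by norm_num) (by omega)
    have h5 := T_approx N 5 (by norm_num) (by omega)
    have h30' := T_approx N 30 (by norm_num) (by omega)
    have hid := main_id (N:ℝ) hN0
    have hT1 : T (N/1) = T N := by rw [Nat.div_one]
    rw [hT1] at h1
    unfold S
    rw [abs_le]
    constructor <;> push_cast at * <;> linarith
  · have hb : ∀ m ≤ 29, T m ≤ 77 := fun m hm => (T_mono hm).trans T29
    have e1 : T N ≤ 77 := hb N (by omega)
    have e2 : T (N/30) ≤ 77 := hb _ (by omega)
    have e3 : T (N/2) ≤ 77 := hb _ (by omega)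
    have e4 : T (N/3) ≤ 77 := hb _ (by omega)
    have e5 : T (N/5) ≤ 77 := hb _ (by omega)
    have p1 := T_nonneg N
    have p2 := T_nonneg (N/30)
    have p3 := T_nonneg (N/2)
    have p4 := T_nonneg (N/3)
    have p5 := T_nonneg (N/5)
    have hA0 := Ac_pos
    have hA1 := Ac_le_one
    have hNle : (N:ℝ) ≤ 30 := by exact_mod_cast (by omega : N ≤ 30)
    have hN0 : (0:ℝ) ≤ N := Nat.cast_nonneg N
    have : Ac * N ≤ 30 := by nlinarith
    have : 0 ≤ Ac * N := by positivity
    unfold S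
    rw [abs_le]
    constructor <;> linarith

theorem T_sum_log (N : ℕ) : T N = ∑ m ∈ Finset.Icc 1 N, Real.log m := by
  unfold T
  induction N with
  | zero => simp
  | succ n ih =>
    rw [Nat.factorial_succ, Nat.cast_mul, Real.log_mul (by positivity)
      (Nat.cast_ne_zero.mpr n.factorial_ne_zero),
      Finset.sum_Icc_succ_top (by omega), ih, add_comm]

theorem psi_le_T (N : ℕ) : psi N ≤ T N := by
  rw [T_sum_log]
  exact Finset.sum_le_sum (fun n _ => vonMangoldt_le_log)

theorem psi_nonneg (N : ℕ) : 0 ≤ psi N :=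
  Finset.sum_nonneg (fun n _ => vonMangoldt_nonneg)

theorem psi_lower (N : ℕ) : Ac * N - (600 + 10 * Real.log (N+1)) ≤ psi N := by
  have h1 := S_le_psi N
  have h2 := (abs_le.mp (S_error N)).1
  linarith

theorem log_le_2sqrt (x : ℝ) (hx : 0 ≤ x) : Real.log (x+1) ≤ 2 * Real.sqrt x := by
  have h0 : (0:ℝ) < x + 1 := by linarith
  have h1 : Real.log (x+1) = 2 * Real.log (Real.sqrt (x+1)) := by
    rw [Real.log_sqrt h0.le]; ring
  have h2 : Real.log (Real.sqrt (x+1)) ≤ Real.sqrt (x+1) - 1 :=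
    Real.log_le_sub_one_of_pos (Real.sqrt_pos.mpr h0)
  have h3 : Real.sqrt (x+1) ≤ Real.sqrt x + 1 := by
    have : x + 1 ≤ (Real.sqrt x + 1)^2 := by
      have hs := Real.sq_sqrt hx
      have hs0 := Real.sqrt_nonneg x
      nlinarith
    calc Real.sqrt (x+1) ≤ Real.sqrt ((Real.sqrt x + 1)^2) := Real.sqrt_le_sqrt this
      _ = Real.sqrt x + 1 := Real.sqrt_sq (by positivity)
  linarith

theorem sqrt_div_le (x : ℝ) (c r : ℝ) (hx : 0 ≤ x) (hc : 0 < c) (hr : 0 ≤ r)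
    (h : 1/c ≤ r^2) : Real.sqrt (x/c) ≤ r * Real.sqrt x := by
  have h1 : x/c ≤ r^2 * x := by
    rw [div_le_iff₀ hc]
    rw [div_le_iff₀ hc] at h
    nlinarith [mul_le_mul_of_nonneg_left h hx]
  calc Real.sqrt (x/c) ≤ Real.sqrt (r^2 * x) := Real.sqrt_le_sqrt h1
    _ = r * Real.sqrt x := by
        rw [Real.sqrt_mul (by positivity), Real.sqrt_sq hr]

noncomputable def Bc : ℝ := 13 * Ac / 11

theorem cast_div_ge (N d : ℕ) (hd : 0 < d) : (N:ℝ)/d - 1 < ((N/d : ℕ) : ℝ) := by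
  have h1 := Nat.div_add_mod N d
  have h2 : N % d < d := Nat.mod_lt _ hd
  have h3 : N < d * (N/d) + d := by
    conv_lhs => rw [← h1]
    exact Nat.add_lt_add_left h2 _
  have h4 : (N:ℝ) < d * ((N/d : ℕ):ℝ) + d := by exact_mod_cast h3
  have hd0 : (0:ℝ) < d := by exact_mod_cast hd
  rw [div_sub_one hd0.ne', div_lt_iff₀ hd0]
  ring_nf
  ring_nf at h4
  linarith

theorem psi_upper (N : ℕ) : psi N ≤ Bc * N + 5000 * Real.sqrt N := by
  induction N using Nat.strong_induction_on with
  | _ N ih =>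
  have hBc : 0 < Bc := by unfold Bc; have := Ac_pos; linarith
  rcases Nat.lt_or_ge N 1 with h0 | h1
  · interval_cases N
    simp [psi]
  rcases Nat.lt_or_ge N 210 with hsm | hlg
  · -- small case
    have hmono : psi N ≤ psi 209 := by
      apply Finset.sum_le_sum_of_subset_of_nonneg
      · exact Finset.Icc_subset_Icc_right (by omega)
      · exact fun n _ _ => vonMangoldt_nonneg
    have hT := psi_le_T 209
    have hT2 := T_le 209 (by norm_num)
    have hlog : Real.log 209 ≤ 8 * Real.log 2 := by
      have h1 : Real.log 209 ≤ Real.log 256 := Real.log_le_log (by norm_num) (by norm_num)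
      rw [show (256:ℝ) = 2^8 by norm_num, Real.log_pow] at h1
      push_cast at h1
      linarith
    have hl2 := log2_lt
    have hl2' : (0:ℝ) < Real.log 2 := Real.log_pos (by norm_num)
    have hsq : (1:ℝ) ≤ Real.sqrt N := by
      rw [show (1:ℝ) = Real.sqrt 1 by simp]
      apply Real.sqrt_le_sqrt
      exact_mod_cast h1
    have hN0 : (0:ℝ) ≤ N := Nat.cast_nonneg N
    have : T 209 ≤ 1165 := by
      push_cast at hT2
      nlinarith
    nlinarith
  · -- main case
    have hrec := psi_rec N
    have hS := (abs_le.mp (S_error N)).2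
    have h6 := ih (N/6) (Nat.div_lt_self (by omega) (by norm_num))
    have h10 := ih (N/10) (Nat.div_lt_self (by omega) (by norm_num))
    have h7 := psi_lower (N/7)
    have hN0 : (0:ℝ) ≤ N := Nat.cast_nonneg N
    have hAc := Ac_pos
    -- cast bounds
    have c6 : ((N/6 : ℕ):ℝ) ≤ (N:ℝ)/6 := Nat.cast_div_le
    have c10 : ((N/10 : ℕ):ℝ) ≤ (N:ℝ)/10 := Nat.cast_div_le
    have c7 : (N:ℝ)/7 - 1 < ((N/7 : ℕ):ℝ) := cast_div_ge N 7 (by norm_num)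
    -- sqrt bounds
    have s6 : Real.sqrt ((N/6 : ℕ):ℝ) ≤ 0.41 * Real.sqrt N := by
      calc Real.sqrt ((N/6 : ℕ):ℝ) ≤ Real.sqrt ((N:ℝ)/6) := Real.sqrt_le_sqrt c6
        _ ≤ 0.41 * Real.sqrt N := sqrt_div_le _ _ _ hN0 (by norm_num) (by norm_num) (by norm_num)
    have s10 : Real.sqrt ((N/10 : ℕ):ℝ) ≤ 0.32 * Real.sqrt N := by
      calc Real.sqrt ((N/10 : ℕ):ℝ) ≤ Real.sqrt ((N:ℝ)/10) := Real.sqrt_le_sqrt c10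
        _ ≤ 0.32 * Real.sqrt N := sqrt_div_le _ _ _ hN0 (by norm_num) (by norm_num) (by norm_num)
    -- log bounds
    have L0 : 0 ≤ Real.log (N+1) := Real.log_nonneg (by linarith)
    have L1 : Real.log (N+1) ≤ 2 * Real.sqrt N := log_le_2sqrt _ hN0
    have L7 : Real.log (((N/7 : ℕ):ℝ)+1) ≤ Real.log (N+1) := by
      apply Real.log_le_log (by positivity)
      have : ((N/7 : ℕ):ℝ) ≤ (N:ℝ)/7 := Nat.cast_div_le
      linarith
    have hsq1 : (1:ℝ) ≤ Real.sqrt N := by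
      rw [show (1:ℝ) = Real.sqrt 1 by simp]
      apply Real.sqrt_le_sqrt
      exact_mod_cast h1
    -- multiply out the Ac * (N/7) bound
    have h7' : Ac * ((N:ℝ)/7 - 1) - (600 + 10 * Real.log (N+1)) ≤ psi (N/7) := by
      have hm : Ac * ((N:ℝ)/7 - 1) ≤ Ac * ((N/7 : ℕ):ℝ) :=
        mul_le_mul_of_nonneg_left c7.le hAc.le
      have := mul_le_mul_of_nonneg_left L7 (by norm_num : (0:ℝ) ≤ 10)
      linarith
    have hb6 : Bc * ((N/6 : ℕ):ℝ) ≤ Bc * ((N:ℝ)/6) := mul_le_mul_of_nonneg_left c6 hBc.le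
    have hb10 : Bc * ((N/10 : ℕ):ℝ) ≤ Bc * ((N:ℝ)/10) := mul_le_mul_of_nonneg_left c10 hBc.le
    -- linear coefficient check : Ac*(6/7) + Bc*(4/15) ≤ Bc  since Bc = 13Ac/11
    have hlin : Ac * (6/7) + Bc * (1/6 + 1/10) ≤ Bc := by
      unfold Bc
      nlinarith
    -- assemble
    have key : psi N ≤ Ac * N + 600 + 10 * Real.log (N+1)
        + (Bc * ((N:ℝ)/6) + 5000 * (0.41 * Real.sqrt N))
        + (Bc * ((N:ℝ)/10) + 5000 * (0.32 * Real.sqrt N))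
        - (Ac * ((N:ℝ)/7 - 1) - (600 + 10 * Real.log (N+1))) := by
      have k6 : psi (N/6) ≤ Bc * ((N:ℝ)/6) + 5000 * (0.41 * Real.sqrt N) := by
        have := mul_le_mul_of_nonneg_left s6 (by norm_num : (0:ℝ) ≤ 5000)
        linarith
      have k10 : psi (N/10) ≤ Bc * ((N:ℝ)/10) + 5000 * (0.32 * Real.sqrt N) := by
        have := mul_le_mul_of_nonneg_left s10 (by norm_num : (0:ℝ) ≤ 5000)
        linarith
      linarith
    have final : Ac * N + Bc * ((N:ℝ)/6) + Bc * ((N:ℝ)/10) - Ac * ((N:ℝ)/7) ≤ Bc * N := by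
      nlinarith [hlin, hN0]
    have hA1 := Ac_le_one
    linarith [key, final, L1, hsq1]

noncomputable def theta (N : ℕ) : ℝ :=
  ∑ p ∈ (Finset.Icc 1 N).filter Nat.Prime, Real.log p

theorem theta_eq (N : ℕ) :
    theta N = ∑ p ∈ (Finset.Icc 1 N).filter Nat.Prime, Λ p := by
  unfold theta
  refine Finset.sum_congr rfl (fun p hp => ?_)
  simp only [Finset.mem_filter] at hp
  rw [vonMangoldt_apply_prime hp.2]

theorem theta_le_psi (N : ℕ) : theta N ≤ psi N := by
  rw [theta_eq]
  exact Finset.sum_le_sum_of_subset_of_nonneg (Finset.filter_subset _ _)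
    (fun _ _ _ => vonMangoldt_nonneg)

theorem psi_sub_theta (N : ℕ) :
    psi N - theta N ≤ 2 * Real.sqrt N * (Real.log (N+1))^2 := by
  rcases Nat.eq_zero_or_pos N with rfl | hN
  · simp [psi, theta]
  have hsplit := Finset.sum_filter_add_sum_filter_not (Finset.Icc 1 N) Nat.Prime
    (fun n => Λ n)
  have hpt : psi N - theta N
      = ∑ n ∈ (Finset.Icc 1 N).filter (fun n => ¬ n.Prime), Λ n := by
    rw [theta_eq]
    unfold psi
    linarith [hsplit]
  set F := (Finset.Icc 1 N).filter (fun n => ¬ n.Prime) with hF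
  have hfilt : ∑ n ∈ F.filter IsPrimePow, Λ n = ∑ n ∈ F, Λ n := by
    apply Finset.sum_filter_of_ne
    intro x _ hx
    exact vonMangoldt_ne_zero_iff.mp hx
  set F2 := F.filter IsPrimePow with hF2
  have hcard : F2 ⊆ Finset.image (fun q : ℕ × ℕ => q.1 ^ q.2)
      ((Finset.Icc 2 (Nat.sqrt N)) ×ˢ (Finset.Icc 2 (Nat.log 2 N))) := by
    intro n hn
    simp only [hF2, hF, Finset.mem_filter, Finset.mem_Icc] at hn
    obtain ⟨⟨⟨hn1, hnN⟩, hnp⟩, hpp⟩ := hn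
    obtain ⟨p, k, hp, hk, rfl⟩ := hpp
    have hpN : p.Prime := Nat.prime_iff.mpr hp
    have hk2 : 2 ≤ k := by
      rcases Nat.lt_or_ge k 2 with h | h
      · have hk1 : k = 1 := by omega
        subst hk1
        rw [pow_one] at hnp
        exact absurd hpN hnp
      · exact h
    have hp2 : 2 ≤ p := hpN.two_le
    have hppk : p * p ≤ p ^ k := by
      calc p * p = p ^ 2 := by ring
        _ ≤ p ^ k := Nat.pow_le_pow_right (by omega) hk2
    have hpsqrt : p ≤ Nat.sqrt N := by
      rw [Nat.le_sqrt]
      exact le_trans hppk hnN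
    have hklog : k ≤ Nat.log 2 N := by
      rw [Nat.le_log_iff_pow_le (by norm_num) (by omega)]
      calc 2 ^ k ≤ p ^ k := Nat.pow_le_pow_left hp2 k
        _ ≤ N := hnN
    simp only [Finset.mem_image, Finset.mem_product, Finset.mem_Icc]
    exact ⟨(p, k), ⟨⟨hp2, hpsqrt⟩, ⟨hk2, hklog⟩⟩, rfl⟩
  have hcard2 : (F2.card : ℝ) ≤ (Nat.sqrt N : ℝ) * (Nat.log 2 N : ℝ) := by
    have h1 := Finset.card_le_card hcard
    have h2 := Finset.card_image_le (s := (Finset.Icc 2 (Nat.sqrt N)) ×ˢ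
      (Finset.Icc 2 (Nat.log 2 N))) (f := fun q : ℕ × ℕ => q.1 ^ q.2)
    have h3 : ((Finset.Icc 2 (Nat.sqrt N)) ×ˢ (Finset.Icc 2 (Nat.log 2 N))).card
        ≤ Nat.sqrt N * Nat.log 2 N := by
      rw [Finset.card_product, Nat.card_Icc, Nat.card_Icc]
      apply Nat.mul_le_mul <;> omega
    have : F2.card ≤ Nat.sqrt N * Nat.log 2 N := le_trans h1 (le_trans h2 h3)
    exact_mod_cast this
  have hterm : ∀ n ∈ F2, Λ n ≤ Real.log (N+1) := by
    intro n hn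
    simp only [hF2, hF, Finset.mem_filter, Finset.mem_Icc] at hn
    calc Λ n ≤ Real.log n := vonMangoldt_le_log
      _ ≤ Real.log (N+1) := by
          apply Real.log_le_log
          · exact_mod_cast hn.1.1.1
          · push_cast; exact_mod_cast (by omega : n ≤ N + 1)
  have hsum : ∑ n ∈ F2, Λ n ≤ (F2.card : ℝ) * Real.log (N+1) := by
    have := Finset.sum_le_card_nsmul F2 (fun n => Λ n) (Real.log (N+1)) hterm
    simpa [nsmul_eq_mul] using this
  have hsqrt : (Nat.sqrt N : ℝ) ≤ Real.sqrt N := Real.nat_sqrt_le_real_sqrt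
  have hlog2N : (Nat.log 2 N : ℝ) ≤ 2 * Real.log (N+1) := by
    have h1 : 2 ^ (Nat.log 2 N) ≤ N := Nat.pow_log_le_self 2 (by omega)
    have h2 : ((2:ℝ)) ^ (Nat.log 2 N) ≤ (N:ℝ) := by exact_mod_cast h1
    have h3 : Real.log ((2:ℝ) ^ (Nat.log 2 N)) ≤ Real.log N :=
      Real.log_le_log (by positivity) h2
    rw [Real.log_pow] at h3
    have h4 : Real.log (N:ℝ) ≤ Real.log ((N:ℝ)+1) :=
      Real.log_le_log (by exact_mod_cast hN) (by linarith)
    have h5 := Real.log_two_gt_d9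
    nlinarith [Nat.cast_nonneg (α := ℝ) (Nat.log 2 N)]
  have hL0 : 0 ≤ Real.log ((N:ℝ)+1) := Real.log_nonneg (by linarith [Nat.cast_nonneg (α := ℝ) N])
  have hs0 : 0 ≤ (Nat.sqrt N : ℝ) := Nat.cast_nonneg _
  have hrs0 : 0 ≤ Real.sqrt (N:ℝ) := Real.sqrt_nonneg _
  have hl20 : 0 ≤ (Nat.log 2 N : ℝ) := Nat.cast_nonneg _
  rw [hpt, ← hfilt]
  calc ∑ n ∈ F2, Λ n ≤ (F2.card : ℝ) * Real.log (N+1) := hsum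
    _ ≤ ((Nat.sqrt N : ℝ) * (Nat.log 2 N : ℝ)) * Real.log (N+1) := by
        apply mul_le_mul_of_nonneg_right hcard2 hL0
    _ ≤ (Real.sqrt N * (2 * Real.log (N+1))) * Real.log (N+1) := by
        apply mul_le_mul_of_nonneg_right _ hL0
        exact mul_le_mul hsqrt hlog2N hl20 hrs0
    _ = 2 * Real.sqrt N * (Real.log (N+1))^2 := by ring

open Filter in
theorem tendsto_G : Filter.Tendsto (fun y : ℝ =>
    (601 + 10*Real.log (3*y) + 3*Real.sqrt y*(Real.log (3*y))^2 + 5000*Real.sqrt y)/y)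
    atTop (nhds 0) := by
  have c1 : Tendsto (fun y:ℝ => 601/y) atTop (nhds 0) := by
    simpa [div_eq_mul_inv] using tendsto_inv_atTop_zero.const_mul (601:ℝ)
  have cl3 : Tendsto (fun y:ℝ => 10*Real.log 3/y) atTop (nhds 0) := by
    simpa [div_eq_mul_inv] using tendsto_inv_atTop_zero.const_mul (10*Real.log 3)
  have c2 : Tendsto (fun y:ℝ => Real.log y / y) atTop (nhds 0) := by
    have := Real.isLittleO_log_id_atTop.tendsto_div_nhds_zero
    simpa using this
  have c4 : Tendsto (fun y:ℝ => Real.log y / Real.sqrt y) atTop (nhds 0) := by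
    have h := (isLittleO_log_rpow_atTop (show (0:ℝ) < 1/2 by norm_num)).tendsto_div_nhds_zero
    exact h.congr (fun y => by rw [Real.sqrt_eq_rpow])
  have c3 : Tendsto (fun y:ℝ => 1/Real.sqrt y) atTop (nhds 0) := by
    have h := tendsto_rpow_neg_atTop (show (0:ℝ) < 1/2 by norm_num)
    apply h.congr'
    filter_upwards [eventually_gt_atTop (0:ℝ)] with y hy
    rw [Real.rpow_neg hy.le, ← Real.sqrt_eq_rpow, one_div]
  have c5 : Tendsto (fun y:ℝ => (Real.log y)^2 / Real.sqrt y) atTop (nhds 0) := by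
    have h := (isLittleO_log_rpow_atTop (show (0:ℝ) < 1/4 by norm_num)).tendsto_div_nhds_zero
    have hm := h.mul h
    rw [mul_zero] at hm
    apply hm.congr'
    filter_upwards [eventually_gt_atTop (0:ℝ)] with y hy
    rw [div_mul_div_comm, ← Real.rpow_add hy]
    norm_num
    rw [← Real.sqrt_eq_rpow, sq]
  have hsum := ((((((c1.add cl3).add (c2.const_mul 10)).add
    (c3.const_mul (3*(Real.log 3)^2))).add
    (c4.const_mul (6*Real.log 3))).add
    (c5.const_mul 3)).add (c3.const_mul 5000))
  simp only [add_zero, mul_zero] at hsum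
  apply hsum.congr'
  filter_upwards [eventually_gt_atTop (0:ℝ)] with y hy
  obtain ⟨s, hspos, rfl⟩ : ∃ s : ℝ, 0 < s ∧ s * s = y :=
    ⟨Real.sqrt y, Real.sqrt_pos.mpr hy, Real.mul_self_sqrt hy.le⟩
  rw [Real.log_mul (by norm_num) hy.ne']
  rw [Real.sqrt_mul_self hspos.le]
  field_simp
  ring

theorem theta_ioc (y : ℕ) :
    theta y = ∑ n ∈ Finset.Ioc 0 y, (if n.Prime then Real.log n else 0) := by
  unfold theta
  rw [icc_eq_ioc, Finset.sum_filter]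

theorem theta_split {a b : ℕ} (h : a ≤ b) :
    theta b - theta a = ∑ n ∈ Finset.Ioc a b, (if n.Prime then Real.log n else 0) := by
  have := Finset.sum_Ioc_consecutive (fun n : ℕ => if n.Prime then Real.log n else 0)
    (Nat.zero_le a) h
  rw [theta_ioc, theta_ioc]
  linarith

theorem sqrt2_le : Real.sqrt 2 ≤ 1.5 := by
  rw [show (1.5:ℝ) = Real.sqrt (1.5^2) by rw [Real.sqrt_sq]; norm_num]
  apply Real.sqrt_le_sqrt; norm_num

set_option maxHeartbeats 2000000 in
/-- Nagura's theorem (weak form): there exists `N` such that for every `x ≥ N`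
there is a prime `p` with `x ≤ p` and `5 * p ≤ 6 * x`. -/
theorem stmt_8 : ∃ N : ℕ, ∀ x : ℕ, N ≤ x → ∃ p : ℕ, p.Prime ∧ x ≤ p ∧ 5 * p ≤ 6 * x := by
  have hA := Ac_pos
  have hev : ∀ᶠ y in Filter.atTop,
      (601 + 10*Real.log (3*y) + 3*Real.sqrt y*(Real.log (3*y))^2 + 5000*Real.sqrt y)/y
        < Ac/55 := tendsto_G.eventually_lt_const (by positivity)
  obtain ⟨y₀, hy₀⟩ := Filter.eventually_atTop.mp hev
  refine ⟨max 1 ⌈y₀⌉₊, fun x hx => ?_⟩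
  have hx1 : 1 ≤ x := le_trans (le_max_left _ _) hx
  have hxy : y₀ ≤ (x:ℝ) := by
    have h1 : ⌈y₀⌉₊ ≤ x := le_trans (le_max_right _ _) hx
    calc y₀ ≤ (⌈y₀⌉₊ : ℝ) := Nat.le_ceil y₀
      _ ≤ (x:ℝ) := by exact_mod_cast h1
  have hxR : (1:ℝ) ≤ (x:ℝ) := by exact_mod_cast hx1
  have hx0 : (0:ℝ) < (x:ℝ) := by linarith
  have hG := hy₀ (x:ℝ) hxy
  rw [div_lt_iff₀ hx0] at hG
  set M := 6*x/5 with hM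
  -- basic inequalities about M
  have hxM : x ≤ M := by
    rw [hM, Nat.le_div_iff_mul_le (by norm_num)]
    omega
  have h5M : 5*M ≤ 6*x := by
    rw [hM]
    have := Nat.div_mul_le_self (6*x) 5
    omega
  have f1 : (M:ℝ) ≤ 6*(x:ℝ)/5 := by
    have := Nat.cast_div_le (m := 6*x) (n := 5) (α := ℝ)
    rw [hM]
    push_cast at this ⊢
    linarith
  have f2 : 6*(x:ℝ)/5 - 1 < (M:ℝ) := by
    have := cast_div_ge (6*x) 5 (by norm_num)
    rw [hM]
    push_cast at this ⊢
    linarith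
  have fM1 : (1:ℝ) ≤ (M:ℝ) := by
    have : (x:ℝ) ≤ (M:ℝ) := by exact_mod_cast hxM
    linarith
  have f3 : (M:ℝ) + 1 ≤ 3*(x:ℝ) := by linarith
  have f4 : Real.sqrt M ≤ 1.5 * Real.sqrt x := by
    have h2x : (M:ℝ) ≤ 2*(x:ℝ) := by linarith
    calc Real.sqrt M ≤ Real.sqrt (2*(x:ℝ)) := Real.sqrt_le_sqrt h2x
      _ = Real.sqrt 2 * Real.sqrt x := Real.sqrt_mul (by norm_num) _
      _ ≤ 1.5 * Real.sqrt x := by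
          have := Real.sqrt_nonneg (x:ℝ)
          nlinarith [sqrt2_le]
  -- log bounds
  have hL3 : (0:ℝ) ≤ Real.log (3*(x:ℝ)) := Real.log_nonneg (by linarith)
  have hLM0 : (0:ℝ) ≤ Real.log ((M:ℝ)+1) := Real.log_nonneg (by linarith)
  have hLM : Real.log ((M:ℝ)+1) ≤ Real.log (3*(x:ℝ)) := Real.log_le_log (by linarith) f3
  -- theta difference lower bound
  have p1 := psi_lower M
  have p2 := psi_sub_theta M
  have p3 := theta_le_psi x
  have p4 := psi_upper x
  have hsqM : (0:ℝ) ≤ Real.sqrt M := Real.sqrt_nonneg _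
  have hsqx : (0:ℝ) ≤ Real.sqrt x := Real.sqrt_nonneg _
  have hLMbound : 2 * Real.sqrt M * (Real.log ((M:ℝ)+1))^2
      ≤ 3 * Real.sqrt x * (Real.log (3*(x:ℝ)))^2 := by
    have h1 : (Real.log ((M:ℝ)+1))^2 ≤ (Real.log (3*(x:ℝ)))^2 := by nlinarith
    nlinarith
  have hlogM1 : Real.log ((M:ℝ)+1) ≤ Real.log (3*(x:ℝ)) := hLM
  -- Ac*M lower
  have hAcM : Ac * (6*(x:ℝ)/5 - 1) ≤ Ac * (M:ℝ) := mul_le_mul_of_nonneg_left f2.le hA.le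
  have hBc : Bc = 13 * Ac / 11 := rfl
  have hA1 := Ac_le_one
  have hkey : 0 < theta M - theta x := by
    have e1 : theta M ≥ Ac * (M:ℝ) - (600 + 10 * Real.log ((M:ℝ)+1))
        - 2 * Real.sqrt M * (Real.log ((M:ℝ)+1))^2 := by
      push_cast at p1 p2 ⊢
      linarith
    have e2 : theta x ≤ Bc * (x:ℝ) + 5000 * Real.sqrt x := by linarith
    have e3 : Ac * (6*(x:ℝ)/5) - Bc * (x:ℝ) = (Ac/55) * (x:ℝ) := by
      rw [hBc]; ring
    have e4 : 10 * Real.log ((M:ℝ)+1) ≤ 10 * Real.log (3*(x:ℝ)) := by linarith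
    linarith [hG, hLMbound, e1, e2, e3, e4, hAcM, hA1]
  -- extract the prime
  rw [theta_split hxM] at hkey
  have hne : ∑ n ∈ Finset.Ioc x M, (if n.Prime then Real.log n else 0) ≠ 0 := by linarith
  obtain ⟨p, hp_mem, hp_ne⟩ := Finset.exists_ne_zero_of_sum_ne_zero hne
  simp only [Finset.mem_Ioc] at hp_mem
  by_cases hpp : p.Prime
  · exact ⟨p, hpp, by omega, by omega⟩
  · simp [hpp] at hp_ne
end
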